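/- arXiv:0710.2509 — 2 statements merged into one kernel-verified Lean document; each statement's English description precedes it below -/
import Mathlib

section
/- Let (A, E) be an exact category and consider an admissible commutative square in A, i.e., a commutative square in which the two horizontal arrows are admissible monomorphisms and the two vertical arrows are admissible epimorphisms. Then this square is cartesian (a pullback) in A if and only if it is cocartesian (a pushout) in A. -/
open CategoryTheory Limits ZeroObject

universe v u

variable {F : Type u} [Category.{v} F] [Abelian F]

/-- A predicate of objects of an abelian category (a full subcategory) is closed under
extensions if for every short exact sequence `0 → x → y → z → 0` with `x`, `z` in the
subcategory, also `y` is in the subcategory. -/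
def ClosedUnderExtensions (P : F → Prop) : Prop :=
  ∀ ⦃x y z : F⦄ (f : x ⟶ y) (g : y ⟶ z) (w : f ≫ g = 0),
    (ShortComplex.mk f g w).ShortExact → P x → P z → P y

/-- A morphism of the exact category `A` (the full subcategory of the abelian envelope `F`
determined by `P`) is an admissible monomorphism if it is the first map of a short exact
sequence of `F` all of whose terms lie in `A`. -/
def AdmissibleMono (P : F → Prop) {x y : F} (f : x ⟶ y) : Prop :=
  P x ∧ P y ∧ ∃ (c : F) (q : y ⟶ c) (w : f ≫ q = 0), P c ∧ (ShortComplex.mk f q w).ShortExact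

/-- A morphism of the exact category `A` is an admissible epimorphism if it is the second map
of a short exact sequence of `F` all of whose terms lie in `A`. -/
def AdmissibleEpi (P : F → Prop) {x y : F} (f : x ⟶ y) : Prop :=
  P x ∧ P y ∧ ∃ (k : F) (ι : k ⟶ x) (w : ι ≫ f = 0), P k ∧ (ShortComplex.mk ι f w).ShortExact

section Aux

/-- In an abelian category, a commutative square with `m₁` a monomorphism and `e₂` an
epimorphism is a pullback iff it is a pushout. -/
lemma abelian_isPullback_iff_isPushout {a b c d : F}
    (m₁ : a ⟶ b) (m₂ : c ⟶ d) (e₁ : a ⟶ c) (e₂ : b ⟶ d)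
    [Mono m₁] [Epi e₂] (comm : m₁ ≫ e₂ = e₁ ≫ m₂) :
    IsPullback m₁ e₁ e₂ m₂ ↔ IsPushout m₁ e₁ e₂ m₂ := by
  have sq : CommSq m₁ e₁ e₂ m₂ := ⟨comm⟩
  have w₁ : biprod.lift m₁ e₁ ≫ biprod.desc e₂ (-m₂) = 0 := by simp [comm]
  have w₂ : biprod.lift m₁ (-e₁) ≫ biprod.desc e₂ m₂ = 0 := by simp [comm]
  haveI : Mono (biprod.lift m₁ e₁) := mono_of_mono_fac (biprod.lift_fst m₁ e₁)
  haveI : Mono (biprod.lift m₁ (-e₁)) := mono_of_mono_fac (biprod.lift_fst m₁ (-e₁))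
  haveI : Epi (biprod.desc e₂ (-m₂)) := epi_of_epi_fac (biprod.inl_desc e₂ (-m₂))
  haveI : Epi (biprod.desc e₂ m₂) := epi_of_epi_fac (biprod.inl_desc e₂ m₂)
  have e : ShortComplex.mk _ _ w₁ ≅ ShortComplex.mk _ _ w₂ := by
    refine ShortComplex.isoMk (Iso.refl _)
      ⟨biprod.map (𝟙 b) (-𝟙 c), biprod.map (𝟙 b) (-𝟙 c), ?_, ?_⟩ (Iso.refl _) ?_ ?_
    · ext <;> simp
    · ext <;> simp
    · dsimp; ext <;> simp
    · dsimp; ext <;> simp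
  constructor
  · intro h
    have hex : (ShortComplex.mk _ _ w₁).Exact :=
      ShortComplex.exact_of_f_is_kernel _ (sq.isLimitEquivIsLimitKernelFork h.isLimit)
    have hex2 : (ShortComplex.mk _ _ w₂).Exact := (ShortComplex.exact_iff_of_iso e).1 hex
    exact IsPushout.of_isColimit
      ((sq.isColimitEquivIsColimitCokernelCofork).symm hex2.gIsCokernel)
  · intro h
    have hex2 : (ShortComplex.mk _ _ w₂).Exact :=
      ShortComplex.exact_of_g_is_cokernel _
        (sq.isColimitEquivIsColimitCokernelCofork h.isColimit)
    have hex : (ShortComplex.mk _ _ w₁).Exact := (ShortComplex.exact_iff_of_iso e).2 hex2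
    exact IsPullback.of_isLimit ((sq.isLimitEquivIsLimitKernelFork).symm hex.fIsKernel)

/-- A pullback square in the extension-closed full subcategory whose right vertical map is
an admissible epimorphism is a pullback square in the ambient abelian category. -/
lemma isPullback_of_sub {P : F → Prop} (hP : ClosedUnderExtensions P)
    {a b c d : F} {ha : P a} {hb : P b} {hc : P c} {hd : P d}
    {m₁ : a ⟶ b} {m₂ : c ⟶ d} {e₁ : a ⟶ c} {e₂ : b ⟶ d}
    (he₂ : AdmissibleEpi P e₂) (comm : m₁ ≫ e₂ = e₁ ≫ m₂)
    (h : IsPullback (C := ObjectProperty.FullSubcategory P) (P := ⟨a, ha⟩) (X := ⟨b, hb⟩)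
      (Y := ⟨c, hc⟩) (Z := ⟨d, hd⟩) (ObjectProperty.homMk m₁) (ObjectProperty.homMk e₁)
      (ObjectProperty.homMk e₂) (ObjectProperty.homMk m₂)) :
    IsPullback m₁ e₁ e₂ m₂ := by
  obtain ⟨-, -, k, ι, wι, hk, hse⟩ := he₂
  haveI : Mono ι := hse.mono_f
  haveI : Epi e₂ := hse.epi_g
  let ι' : k ⟶ pullback e₂ m₂ := pullback.lift ι 0 (by simp [wι])
  have hι'fst : ι' ≫ pullback.fst e₂ m₂ = ι := pullback.lift_fst _ _ _
  have hι'snd : ι' ≫ pullback.snd e₂ m₂ = 0 := pullback.lift_snd _ _ _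
  haveI : Mono ι' := mono_of_mono_fac hι'fst
  have hK := hse.exact.fIsKernel
  have hlift : ∀ {T : F} (t : T ⟶ pullback e₂ m₂), t ≫ pullback.snd e₂ m₂ = 0 →
      ∃ l : T ⟶ k, l ≫ ι' = t := by
    intro T t ht
    have hcond : (t ≫ pullback.fst e₂ m₂) ≫ e₂ = (t ≫ pullback.fst e₂ m₂) ≫ 0 := by
      rw [comp_zero, Category.assoc, pullback.condition, ← Category.assoc, ht, zero_comp]
    obtain ⟨l, hl⟩ := Fork.IsLimit.lift' hK (t ≫ pullback.fst e₂ m₂) hcond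
    refine ⟨l, pullback.hom_ext ?_ ?_⟩
    · rw [Category.assoc, hι'fst]
      exact hl
    · rw [Category.assoc, hι'snd, comp_zero, ht]
  have klim : IsLimit (KernelFork.ofι ι' hι'snd) :=
    KernelFork.IsLimit.ofι _ _
      (fun {T} t ht => (hlift t ht).choose)
      (fun {T} t ht => (hlift t ht).choose_spec)
      (fun {T} t ht mm hmm => by rw [← cancel_mono ι', hmm, (hlift t ht).choose_spec])
  have hse' : (ShortComplex.mk ι' (pullback.snd e₂ m₂) hι'snd).ShortExact :=
    ShortComplex.ShortExact.mk' (ShortComplex.exact_of_f_is_kernel _ klim)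
      inferInstance inferInstance
  have Ppb : P (pullback e₂ m₂) := hP ι' (pullback.snd e₂ m₂) hι'snd hse' hk hc
  have hFpb : IsPullback (pullback.fst e₂ m₂) (pullback.snd e₂ m₂) e₂ m₂ :=
    IsPullback.of_hasPullback e₂ m₂
  have hApb : IsPullback (C := ObjectProperty.FullSubcategory P) (P := ⟨_, Ppb⟩) (X := ⟨b, hb⟩)
      (Y := ⟨c, hc⟩) (Z := ⟨d, hd⟩) (ObjectProperty.homMk (pullback.fst e₂ m₂))
      (ObjectProperty.homMk (pullback.snd e₂ m₂)) (ObjectProperty.homMk e₂)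
      (ObjectProperty.homMk m₂) :=
    IsPullback.of_map (ObjectProperty.ι P) (InducedCategory.hom_ext pullback.condition) hFpb
  exact IsPullback.of_iso_pullback ⟨comm⟩
    ((ObjectProperty.ι P).mapIso (h.isoIsPullback _ _ hApb))
    (congrArg (fun f => f.hom) (h.isoIsPullback_hom_fst _ _ hApb))
    (congrArg (fun f => f.hom) (h.isoIsPullback_hom_snd _ _ hApb))

/-- A pushout square in the extension-closed full subcategory whose top horizontal map is
an admissible monomorphism is a pushout square in the ambient abelian category. -/
lemma isPushout_of_sub {P : F → Prop} (hP : ClosedUnderExtensions P)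
    {a b c d : F} {ha : P a} {hb : P b} {hc : P c} {hd : P d}
    {m₁ : a ⟶ b} {m₂ : c ⟶ d} {e₁ : a ⟶ c} {e₂ : b ⟶ d}
    (hm₁ : AdmissibleMono P m₁) (comm : m₁ ≫ e₂ = e₁ ≫ m₂)
    (h : IsPushout (C := ObjectProperty.FullSubcategory P) (Z := ⟨a, ha⟩) (X := ⟨b, hb⟩)
      (Y := ⟨c, hc⟩) (P := ⟨d, hd⟩) (ObjectProperty.homMk m₁) (ObjectProperty.homMk e₁)
      (ObjectProperty.homMk e₂) (ObjectProperty.homMk m₂)) :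
    IsPushout m₁ e₁ e₂ m₂ := by
  obtain ⟨-, -, x, q, wq, hx, hse⟩ := hm₁
  haveI : Mono m₁ := hse.mono_f
  haveI : Epi q := hse.epi_g
  let q' : pushout m₁ e₁ ⟶ x := pushout.desc q 0 (by simp [wq])
  have hinlq' : pushout.inl m₁ e₁ ≫ q' = q := pushout.inl_desc _ _ _
  have hinrq' : pushout.inr m₁ e₁ ≫ q' = 0 := pushout.inr_desc _ _ _
  haveI : Epi q' := epi_of_epi_fac hinlq'
  have hC := hse.exact.gIsCokernel
  have hdesc : ∀ {T : F} (t : pushout m₁ e₁ ⟶ T), pushout.inr m₁ e₁ ≫ t = 0 →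
      ∃ l : x ⟶ T, q' ≫ l = t := by
    intro T t ht
    have hcond : m₁ ≫ pushout.inl m₁ e₁ ≫ t = 0 ≫ pushout.inl m₁ e₁ ≫ t := by
      rw [zero_comp, ← Category.assoc, pushout.condition, Category.assoc, ht, comp_zero]
    obtain ⟨l, hl⟩ := Cofork.IsColimit.desc' hC (pushout.inl m₁ e₁ ≫ t) hcond
    refine ⟨l, pushout.hom_ext ?_ ?_⟩
    · rw [← Category.assoc, hinlq']
      exact hl
    · rw [← Category.assoc, hinrq', zero_comp, ht]
  have clim : IsColimit (CokernelCofork.ofπ q' hinrq') :=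
    CokernelCofork.IsColimit.ofπ _ _
      (fun {T} t ht => (hdesc t ht).choose)
      (fun {T} t ht => (hdesc t ht).choose_spec)
      (fun {T} t ht mm hmm => by rw [← cancel_epi q', hmm, (hdesc t ht).choose_spec])
  haveI : Mono (pushout.inr m₁ e₁) := inferInstance
  have hse' : (ShortComplex.mk (pushout.inr m₁ e₁) q' hinrq').ShortExact :=
    ShortComplex.ShortExact.mk' (ShortComplex.exact_of_g_is_cokernel _ clim)
      inferInstance inferInstance
  have Ppo : P (pushout m₁ e₁) := hP (pushout.inr m₁ e₁) q' hinrq' hse' hc hx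
  have hFpo : IsPushout m₁ e₁ (pushout.inl m₁ e₁) (pushout.inr m₁ e₁) :=
    IsPushout.of_hasPushout m₁ e₁
  have hApo : IsPushout (C := ObjectProperty.FullSubcategory P) (Z := ⟨a, ha⟩) (X := ⟨b, hb⟩)
      (Y := ⟨c, hc⟩) (P := ⟨_, Ppo⟩) (ObjectProperty.homMk m₁) (ObjectProperty.homMk e₁)
      (ObjectProperty.homMk (pushout.inl m₁ e₁)) (ObjectProperty.homMk (pushout.inr m₁ e₁)) :=
    IsPushout.of_map (ObjectProperty.ι P) (InducedCategory.hom_ext pushout.condition) hFpo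
  exact IsPushout.of_iso_pushout ⟨comm⟩
    ((ObjectProperty.ι P).mapIso (h.isoIsPushout _ _ hApo))
    (congrArg (fun f => f.hom) (h.inl_isoIsPushout_hom _ _ hApo))
    (congrArg (fun f => f.hom) (h.inr_isoIsPushout_hom _ _ hApo))

end Aux

/-- Let `(A, E)` be an exact category, presented via the Quillen embedding as
a full additive extension-closed subcategory (predicate `P`) of its abelian envelope `F`.
Consider an admissible commutative square of `A`: horizontal arrows `m₁ : a ⟶ b`, `m₂ : c ⟶ d`
admissible monomorphisms and vertical arrows `e₁ : a ⟶ c`, `e₂ : b ⟶ d` admissible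
epimorphisms. Then the square is cartesian (a pullback) in `A` if and only if it is cocartesian
(a pushout) in `A`. -/
theorem admissible_square_isPullback_iff_isPushout
    (P : F → Prop) (hP : ClosedUnderExtensions P)
    (hzero : P 0) (hbiprod : ∀ x y : F, P x → P y → P (x ⊞ y))
    {a b c d : F} (ha : P a) (hb : P b) (hc : P c) (hd : P d)
    (m₁ : a ⟶ b) (m₂ : c ⟶ d) (e₁ : a ⟶ c) (e₂ : b ⟶ d)
    (hm₁ : AdmissibleMono P m₁) (hm₂ : AdmissibleMono P m₂)
    (he₁ : AdmissibleEpi P e₁) (he₂ : AdmissibleEpi P e₂)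
    (comm : m₁ ≫ e₂ = e₁ ≫ m₂) :
    IsPullback (C := ObjectProperty.FullSubcategory P) (P := ⟨a, ha⟩) (X := ⟨b, hb⟩) (Y := ⟨c, hc⟩)
        (Z := ⟨d, hd⟩) (ObjectProperty.homMk m₁) (ObjectProperty.homMk e₁)
        (ObjectProperty.homMk e₂) (ObjectProperty.homMk m₂) ↔
      IsPushout (C := ObjectProperty.FullSubcategory P) (Z := ⟨a, ha⟩) (X := ⟨b, hb⟩) (Y := ⟨c, hc⟩)
        (P := ⟨d, hd⟩) (ObjectProperty.homMk m₁) (ObjectProperty.homMk e₁)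
        (ObjectProperty.homMk e₂) (ObjectProperty.homMk m₂) := by
  haveI : Mono m₁ := hm₁.2.2.choose_spec.choose_spec.choose_spec.2.mono_f
  haveI : Epi e₂ := he₂.2.2.choose_spec.choose_spec.choose_spec.2.epi_g
  constructor
  · intro h
    have hF : IsPullback m₁ e₁ e₂ m₂ := isPullback_of_sub hP he₂ comm h
    have hFpo : IsPushout m₁ e₁ e₂ m₂ :=
      (abelian_isPullback_iff_isPushout m₁ m₂ e₁ e₂ comm).1 hF
    exact IsPushout.of_map (ObjectProperty.ι P) (InducedCategory.hom_ext comm) hFpo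
  · intro h
    have hF : IsPushout m₁ e₁ e₂ m₂ := isPushout_of_sub hP hm₁ comm h
    have hFpb : IsPullback m₁ e₁ e₂ m₂ :=
      (abelian_isPullback_iff_isPushout m₁ m₂ e₁ e₂ comm).2 hF
    exact IsPullback.of_map (ObjectProperty.ι P) (InducedCategory.hom_ext comm) hFpb
end

section
/- Let three admissible squares be given: (X', Y', T', Z') with monos m'₁ : X' → Y', m'₂ : T' → Z' and epis e'₂ : X' → T', e'₁ : Y' → Z'; (X, Y, T, Z) with m₁, m₂, e₂, e₁ analogously; and (X'', Y'', T'', Z'') with m''₁, m''₂, e''₂, e''₁. Suppose the first and third squares are cartesian, and suppose given admissible short exact sequences X' → X → X'', Y' → Y → Y'', T' → T → T'', Z' → Z → Z'' making the resulting cubic diagram commute. Then the middle square (X, Y, T, Z) is cartesian. -/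
open CategoryTheory Limits

/-- (Extension of cartesian admissible squares.) In an abelian category, given
three admissible squares (horizontal arrows `m` monomorphisms, vertical arrows `e` epimorphisms),
of which the first and third are cartesian, and short exact sequences
`X' → X → X''`, `Y' → Y → Y''`, `T' → T → T''`, `Z' → Z → Z''` making the resulting cubic
diagram commute, the middle square is cartesian. -/
theorem middle_square_cartesian_of_extension {A : Type*} [Category A] [Abelian A]
    {X' Y' T' Z' X Y T Z X'' Y'' T'' Z'' : A}
    -- the three admissible squares
    (m'₁ : X' ⟶ Y') (m'₂ : T' ⟶ Z') (e'₂ : X' ⟶ T') (e'₁ : Y' ⟶ Z')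
    (m₁ : X ⟶ Y) (m₂ : T ⟶ Z) (e₂ : X ⟶ T) (e₁ : Y ⟶ Z)
    (m''₁ : X'' ⟶ Y'') (m''₂ : T'' ⟶ Z'') (e''₂ : X'' ⟶ T'') (e''₁ : Y'' ⟶ Z'')
    (_ : Mono m'₁) (_ : Mono m'₂) (_ : Epi e'₂) (_ : Epi e'₁)
    (_ : Mono m₁) (_ : Mono m₂) (_ : Epi e₂) (_ : Epi e₁)
    (_ : Mono m''₁) (_ : Mono m''₂) (_ : Epi e''₂) (_ : Epi e''₁)
    (sq' : m'₁ ≫ e'₁ = e'₂ ≫ m'₂) (sq : m₁ ≫ e₁ = e₂ ≫ m₂)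
    (sq'' : m''₁ ≫ e''₁ = e''₂ ≫ m''₂)
    -- the first and third squares are cartesian
    (hsq' : IsPullback m'₁ e'₂ e'₁ m'₂) (hsq'' : IsPullback m''₁ e''₂ e''₁ m''₂)
    -- the four short exact sequences
    (f : X' ⟶ X) (g : X ⟶ X'') (wX : f ≫ g = 0)
    (hX : (ShortComplex.mk f g wX).ShortExact)
    (f' : Y' ⟶ Y) (g' : Y ⟶ Y'') (wY : f' ≫ g' = 0)
    (hY : (ShortComplex.mk f' g' wY).ShortExact)
    (f''' : T' ⟶ T) (g''' : T ⟶ T'') (wT : f''' ≫ g''' = 0)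
    (hT : (ShortComplex.mk f''' g''' wT).ShortExact)
    (f'' : Z' ⟶ Z) (g'' : Z ⟶ Z'') (wZ : f'' ≫ g'' = 0)
    (hZ : (ShortComplex.mk f'' g'' wZ).ShortExact)
    -- commutativity of the cubic diagram
    (c₁ : m'₁ ≫ f' = f ≫ m₁) (c₂ : e'₂ ≫ f''' = f ≫ e₂)
    (c₃ : e'₁ ≫ f'' = f' ≫ e₁) (c₄ : m'₂ ≫ f'' = f''' ≫ m₂)
    (c₅ : m₁ ≫ g' = g ≫ m''₁) (c₆ : e₂ ≫ g''' = g ≫ e''₂)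
    (c₇ : e₁ ≫ g'' = g' ≫ e''₁) (c₈ : m₂ ≫ g'' = g''' ≫ m''₂) :
    IsPullback m₁ e₂ e₁ m₂ := by
  rename_i hm'₁ hm'₂ he'₂ he'₁ hm₁ hm₂ he₂ he₁ hm''₁ hm''₂ he''₂ he''₁
  have hgepi : Epi g := hX.epi_g
  have hf'mono : Mono f' := hY.mono_f
  have hf''mono : Mono f'' := hZ.mono_f
  have w : biprod.lift m₁ e₂ ≫ biprod.desc e₁ (-m₂) = 0 := by simp [sq]
  have hexact : (ShortComplex.mk _ _ w).Exact := by
    rw [ShortComplex.exact_iff_exact_up_to_refinements]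
    intro A₀ a ha
    dsimp at a ha ⊢
    have hd : biprod.desc e₁ (-m₂) = biprod.fst ≫ e₁ - biprod.snd ≫ m₂ := by
      ext <;> simp
    have hyt : a ≫ biprod.fst ≫ e₁ = a ≫ biprod.snd ≫ m₂ := by
      have h : a ≫ (biprod.fst ≫ e₁ - biprod.snd ≫ m₂) = 0 := by rw [← hd]; exact ha
      rw [Preadditive.comp_sub, sub_eq_zero] at h
      simpa only [Category.assoc] using h
    -- step 1 : lift to X'' via the pullback hsq''
    have h1 : (a ≫ biprod.fst ≫ g') ≫ e''₁ = (a ≫ biprod.snd ≫ g''') ≫ m''₂ := by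
      try simp only [Category.assoc]
      rw [← c₇, ← c₈]
      try simp only [Category.assoc]
      rw [reassoc_of% hyt]
    obtain ⟨A₁, π, hπ, x, hx⟩ := surjective_up_to_refinements_of_epi g
      (hsq''.lift (a ≫ biprod.fst ≫ g') (a ≫ biprod.snd ≫ g''') h1)
    -- step 2 : y-correction factors through f'
    have hybar0 : (π ≫ a ≫ biprod.fst - x ≫ m₁) ≫ g' = 0 := by
      simp only [Preadditive.sub_comp, Category.assoc, c₅]
      rw [← Category.assoc x g, ← hx]
      simp
    obtain ⟨A₂, π₂, hπ₂, y', hy'⟩ := hY.exact.exact_up_to_refinements _ hybar0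
    dsimp at y' hy'
    -- step 3 : t-correction factors through f'''
    have htbar0 : (π ≫ a ≫ biprod.snd - x ≫ e₂) ≫ g''' = 0 := by
      simp only [Preadditive.sub_comp, Category.assoc, c₆]
      rw [← Category.assoc x g, ← hx]
      simp
    obtain ⟨A₃, π₃, hπ₃, t', ht'⟩ := hT.exact.exact_up_to_refinements
      (π₂ ≫ (π ≫ a ≫ biprod.snd - x ≫ e₂)) (by rw [Category.assoc, htbar0, Limits.comp_zero])
    dsimp at t' ht'
    -- step 4 : the primed elements match in Z'
    have h5 : (π₃ ≫ y') ≫ e'₁ = t' ≫ m'₂ := by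
      rw [← cancel_mono f'']
      have lhs : (π₃ ≫ y') ≫ e'₁ ≫ f'' =
          π₃ ≫ π₂ ≫ (π ≫ a ≫ biprod.fst - x ≫ m₁) ≫ e₁ := by
        simp only [Category.assoc, c₃]
        rw [← reassoc_of% hy']
      have rhs : t' ≫ m'₂ ≫ f'' = π₃ ≫ π₂ ≫ (π ≫ a ≫ biprod.snd - x ≫ e₂) ≫ m₂ := by
        rw [c₄, ← Category.assoc, ← ht']
        try simp only [Category.assoc]
      rw [Category.assoc, lhs, Category.assoc, rhs]
      congr 1
      congr 1
      simp only [Preadditive.sub_comp, Category.assoc, sq]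
      try simp only [Category.assoc]
      rw [hyt]
    -- conclusion
    refine ⟨A₃, π₃ ≫ π₂ ≫ π, inferInstance,
      π₃ ≫ π₂ ≫ x + hsq'.lift (π₃ ≫ y') t' h5 ≫ f, ?_⟩
    ext
    · simp only [Category.assoc, Preadditive.add_comp, biprod.lift_fst]
      rw [← c₁, ← Category.assoc _ m'₁ f', hsq'.lift_fst, Category.assoc, ← hy']
      simp only [Category.assoc, Preadditive.comp_sub]
      abel
    · simp only [Category.assoc, Preadditive.add_comp, biprod.lift_snd]
      rw [← c₂, ← Category.assoc _ e'₂ f''', hsq'.lift_snd, ← ht']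
      simp only [Category.assoc, Preadditive.comp_sub]
      abel
  -- from exactness to short exactness to pullback
  have hmonoF : Mono (biprod.lift m₁ e₂) := by
    have h : biprod.lift m₁ e₂ ≫ biprod.fst = m₁ := by simp
    exact mono_of_mono_fac h
  have hk : IsLimit (KernelFork.ofι (biprod.lift m₁ e₂) w) := hexact.fIsKernel
  have csq : CommSq m₁ e₂ e₁ m₂ := ⟨sq⟩
  exact IsPullback.of_isLimit' csq (csq.isLimitEquivIsLimitKernelFork.symm hk)
end
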